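/- Let s, u : (0,1] → ℝ≥0 be step functions with finitely many pieces, and let s̃ : (0,1] → ℝ≥0 be a nondecreasing step function with finitely many pieces such that ∫₀^{m₀} s̃(x)dx = ∫₀^{m₀} s(x)dx whenever m₀ = 1 or m₀ is a point of discontinuity of s̃. If 4·∫₀^m s(x)dx ≥ ∫₀^m u(x)dx for all m ∈ (0,1], then 4·PF(s̃, m) ≥ PF(u, m) for all m ∈ (0,1], where PF denotes the sorted prefix sum. -/

import Mathlib

open MeasureTheory

namespace PD

/-- A step function on `(0,1]` with finitely many pieces: constant on each
interval of some finite partition of `(0,1]` into half-open intervals. -/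
def IsStepFun (g : ℝ → ℝ) : Prop :=
  ∃ (k : ℕ) (t : Fin (k + 1) → ℝ), StrictMono t ∧ t 0 = 0 ∧ t (Fin.last k) = 1 ∧
    ∀ i : Fin k, ∀ x ∈ Set.Ioc (t i.castSucc) (t i.succ),
      ∀ y ∈ Set.Ioc (t i.castSucc) (t i.succ), g x = g y

/-- Sorted `m`-prefix sum of `g` on `(0,1]`: the infimum of `∫_T g` over
(measurable) subsets `T` of `(0,1]` of total length `m`. -/
noncomputable def PF (g : ℝ → ℝ) (m : ℝ) : ℝ :=
  sInf { r : ℝ | ∃ T : Set ℝ, T ⊆ Set.Ioc 0 1 ∧ MeasurableSet T ∧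
    volume T = ENNReal.ofReal m ∧ r = ∫ x in T, g x }

open Set in
structure StepData (g : ℝ → ℝ) (k : ℕ) (P : ℕ → ℝ) : Prop where
  mono : Monotone P
  zero : P 0 = 0
  one : P k = 1
  strict : ∀ i < k, P i < P (i+1)
  const : ∀ i < k, ∀ x ∈ Set.Ioc (P i) (P (i+1)), g x = g (P (i+1))

lemma isStepFun_nat {g : ℝ → ℝ} (hg : IsStepFun g) : ∃ k P, StepData g k P := by
  obtain ⟨k, p, hsm, h0, h1, hc⟩ := hg
  refine ⟨k, fun n => p ⟨min n k, by omega⟩, ?_, ?_, ?_, ?_, ?_⟩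
  · intro n m hnm
    exact (hsm.monotone (by simp [Fin.mk_le_mk]; omega))
  · rw [← h0]; congr 1
  · rw [← h1]; congr 1; ext; simp [Fin.last]
  · intro i hi
    apply hsm
    simp [Fin.lt_def]; omega
  · intro i hi x hx
    have e1 : (⟨min i k, by omega⟩ : Fin (k+1)) = (⟨i, hi⟩ : Fin k).castSucc := by
      simp [Fin.castSucc, Fin.castAdd, Fin.castLE]; omega
    have e2 : (⟨min (i+1) k, by omega⟩ : Fin (k+1)) = (⟨i, hi⟩ : Fin k).succ := by
      simp [Fin.succ]; omega
    rw [e1, e2] at hx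
    rw [e2]
    refine hc ⟨i, hi⟩ x hx _ ⟨hsm (by simp [Fin.lt_def]), le_rfl⟩

section SD

variable {g : ℝ → ℝ} {k : ℕ} {P : ℕ → ℝ}

lemma SD_strict' (h : StepData g k P) {i j : ℕ} (hij : i < j) (hj : j ≤ k) : P i < P j := by
  have h1 : P i < P (i+1) := h.strict i (by omega)
  exact lt_of_lt_of_le h1 (h.mono (by omega))

lemma SD_cover (h : StepData g k P) :
    Set.Ioc (0:ℝ) 1 = ⋃ i ∈ Finset.range k, Set.Ioc (P i) (P (i+1)) := by
  have := h.mono.biUnion_Ico_Ioc_map_succ 0 k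
  simp only [Order.succ_eq_add_one] at this
  rw [← h.zero, ← h.one, ← this]
  ext x
  simp

lemma SD_integrableOn (h : StepData g k P) : IntegrableOn g (Set.Ioc 0 1) := by
  rw [SD_cover h]
  rw [integrableOn_finset_iUnion]
  intro i hi
  simp only [Finset.mem_range] at hi
  have : IntegrableOn (fun _ : ℝ => g (P (i+1))) (Set.Ioc (P i) (P (i+1))) := by
    exact integrableOn_const (by simp [Real.volume_Ioc]) (by simp)
  exact (this.congr_fun (fun x hx => (h.const i hi x hx).symm) measurableSet_Ioc)

lemma SD_integrableOn' (h : StepData g k P) {T : Set ℝ} (hT : T ⊆ Set.Ioc 0 1) :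
    IntegrableOn g T := (SD_integrableOn h).mono_set hT

lemma SD_integral_subpiece (h : StepData g k P) {i : ℕ} (hi : i < k) {a b : ℝ}
    (ha : P i ≤ a) (hab : a ≤ b) (hb : b ≤ P (i+1)) :
    ∫ x in Set.Ioc a b, g x = (b - a) * g (P (i+1)) := by
  have hsub : Set.Ioc a b ⊆ Set.Ioc (P i) (P (i+1)) := Set.Ioc_subset_Ioc ha hb
  rw [setIntegral_congr_fun measurableSet_Ioc (fun x hx => h.const i hi x (hsub hx))]
  rw [setIntegral_const, Real.volume_real_Ioc_of_le hab, smul_eq_mul]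

end SD

lemma PF_le {g : ℝ → ℝ} (hg0 : ∀ x ∈ Set.Ioc (0:ℝ) 1, 0 ≤ g x) {m : ℝ} {S : Set ℝ}
    (hS : S ⊆ Set.Ioc 0 1) (hSm : MeasurableSet S) (hvol : volume S = ENNReal.ofReal m) :
    PF g m ≤ ∫ x in S, g x := by
  apply csInf_le
  · refine ⟨0, ?_⟩
    rintro r ⟨T, hT, hTm, hTv, rfl⟩
    exact setIntegral_nonneg hTm (fun x hx => hg0 x (hT hx))
  · exact ⟨S, hS, hSm, hvol, rfl⟩

lemma PF_eq_of_monotone {g : ℝ → ℝ} {k : ℕ} {P : ℕ → ℝ} (h : StepData g k P)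
    (hg0 : ∀ x ∈ Set.Ioc (0:ℝ) 1, 0 ≤ g x)
    (hmono : MonotoneOn g (Set.Ioc (0:ℝ) 1)) {m : ℝ} (hm : m ∈ Set.Ioc (0:ℝ) 1) :
    PF g m = ∫ x in Set.Ioc 0 m, g x := by
  have hA1 : Set.Ioc 0 m ⊆ Set.Ioc (0:ℝ) 1 := Set.Ioc_subset_Ioc le_rfl hm.2
  have hAvol : volume (Set.Ioc (0:ℝ) m) = ENNReal.ofReal m := by
    rw [Real.volume_Ioc, sub_zero]
  apply le_antisymm
  · exact PF_le hg0 hA1 measurableSet_Ioc hAvol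
  · unfold PF
    refine le_csInf ⟨∫ x in Set.Ioc (0:ℝ) m, g x, Set.Ioc 0 m, hA1, measurableSet_Ioc, hAvol, rfl⟩ ?_
    rintro r ⟨T, hT, hTm, hTv, rfl⟩
    set A := Set.Ioc (0:ℝ) m with hA
    have hintT : IntegrableOn g T := SD_integrableOn' h hT
    have hintA : IntegrableOn g A := SD_integrableOn' h hA1
    have e1 : (∫ x in T ∩ A, g x) + ∫ x in T \ A, g x = ∫ x in T, g x :=
      integral_inter_add_diff measurableSet_Ioc hintT
    have e2 : (∫ x in A ∩ T, g x) + ∫ x in A \ T, g x = ∫ x in A, g x :=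
      integral_inter_add_diff hTm hintA
    rw [Set.inter_comm] at e1
    -- measures of the two differences agree
    have hvfin : volume T ≠ ⊤ := by rw [hTv]; exact ENNReal.ofReal_ne_top
    have hvfinA : volume A ≠ ⊤ := by rw [hAvol]; exact ENNReal.ofReal_ne_top
    have m1 : volume (T ∩ A) + volume (T \ A) = volume T := measure_inter_add_diff T measurableSet_Ioc
    have m2 : volume (A ∩ T) + volume (A \ T) = volume A := measure_inter_add_diff A hTm
    rw [Set.inter_comm] at m1
    have hvolEq : volume (T \ A) = volume (A \ T) := by
      have hfin : volume (A ∩ T) ≠ ⊤ := by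
        intro hcon
        exact hvfinA (by rw [← m2, hcon, top_add])
      have := m1.trans hTv
      rw [← m2.trans hAvol] at this
      exact (ENNReal.add_right_inj hfin).1 this
    -- bound via g m
    have hmIoc : m ∈ Set.Ioc (0:ℝ) 1 := hm
    have hTA_sub : T \ A ⊆ Set.Ioc m 1 := by
      intro x hx
      have hx1 := hT hx.1
      have : ¬ (x ≤ m) := fun hle => hx.2 ⟨hx1.1, hle⟩
      exact ⟨lt_of_not_ge this, hx1.2⟩
    have hAT_sub : A \ T ⊆ A := Set.diff_subset
    have hTAfin : volume (T \ A) ≠ ⊤ := by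
      intro hcon; exact hvfin (by rw [← m1, hcon, add_top])
    have hb1 : (volume (A \ T)).toReal * g m ≤ ∫ x in T \ A, g x := by
      rw [← hvolEq]
      have : ∫ x in T \ A, g m = (volume (T \ A)).toReal * g m := by
        rw [setIntegral_const, smul_eq_mul, measureReal_def]
      rw [← this]
      apply setIntegral_mono_on
      · exact integrableOn_const hTAfin
      · exact hintT.mono_set Set.diff_subset
      · exact hTm.diff measurableSet_Ioc
      · intro x hx
        have hx' := hTA_sub hx
        exact hmono hmIoc ⟨lt_trans hm.1 hx'.1, hx'.2⟩ (le_of_lt hx'.1)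
    have hb2 : ∫ x in A \ T, g x ≤ (volume (A \ T)).toReal * g m := by
      have : ∫ x in A \ T, g m = (volume (A \ T)).toReal * g m := by
        rw [setIntegral_const, smul_eq_mul, measureReal_def]
      rw [← this]
      have hATfin : volume (A \ T) ≠ ⊤ := by rw [← hvolEq]; exact hTAfin
      apply setIntegral_mono_on
      · exact hintA.mono_set Set.diff_subset
      · exact integrableOn_const hATfin
      · exact measurableSet_Ioc.diff hTm
      · intro x hx
        have hx' := hAT_sub hx
        exact hmono (hA1 hx') hmIoc hx'.2
    linarith


lemma integral_Ioc_split {g : ℝ → ℝ} (hg : IntegrableOn g (Set.Ioc 0 1)) {a b c : ℝ}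
    (h0 : 0 ≤ a) (hab : a ≤ b) (hbc : b ≤ c) (hc : c ≤ 1) :
    ∫ x in Set.Ioc a c, g x = (∫ x in Set.Ioc a b, g x) + ∫ x in Set.Ioc b c, g x := by
  rw [← Set.Ioc_union_Ioc_eq_Ioc hab hbc]
  exact setIntegral_union (Set.Ioc_disjoint_Ioc_of_le le_rfl) measurableSet_Ioc
    (hg.mono_set (Set.Ioc_subset_Ioc (le_refl a) (by linarith) |>.trans
      (Set.Ioc_subset_Ioc h0 (by linarith))))
    (hg.mono_set (Set.Ioc_subset_Ioc (by linarith) hc))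

lemma chord {g : ℝ → ℝ} {k : ℕ} {P : ℕ → ℝ} (h : StepData g k P)
    {a m b : ℝ} (h0a : 0 ≤ a) (ham : a ≤ m) (hmb : m ≤ b) (hb1 : b ≤ 1) (hab : a < b) :
    ∃ S : Set ℝ, S ⊆ Set.Ioc 0 1 ∧ MeasurableSet S ∧ volume S = ENNReal.ofReal m ∧
      (∫ x in S, g x) = (∫ x in Set.Ioc 0 a, g x) +
        ((m - a)/(b - a)) * ((∫ x in Set.Ioc 0 b, g x) - ∫ x in Set.Ioc 0 a, g x) := by
  classical
  set lam : ℝ := (m - a)/(b - a) with hlam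
  have hba : (0:ℝ) < b - a := by linarith
  have hlam0 : 0 ≤ lam := div_nonneg (by linarith) (le_of_lt hba)
  have hlam1 : lam ≤ 1 := by
    rw [hlam, div_le_one hba]; linarith
  set c : ℕ → ℝ := fun i => min b (max a (P i)) with hc
  have hcmono : Monotone c := fun i j hij =>
    min_le_min le_rfl (max_le_max le_rfl (h.mono hij))
  have hc0 : c 0 = a := by
    simp only [hc, h.zero]
    rw [max_eq_left h0a, min_eq_right (le_of_lt hab)]
  have hck : c k = b := by
    simp only [hc, h.one]
    rw [max_eq_right (by linarith : a ≤ 1), min_eq_left hb1]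
  have hca : ∀ i, a ≤ c i := fun i => le_min (le_of_lt hab) (le_max_left _ _)
  have hcb : ∀ i, c i ≤ b := fun i => min_le_left _ _
  -- endpoints of nondegenerate clipped pieces lie in the original piece
  have hpl : ∀ i, c i < c (i+1) → P i ≤ c i ∧ c (i+1) ≤ P (i+1) := by
    intro i hlt
    constructor
    · have h1 : c i < b := lt_of_lt_of_le hlt (hcb _)
      have h2 : max a (P i) < b := by
        by_contra hcon
        push_neg at hcon
        have : c i = b := by simp only [hc]; rw [min_eq_left hcon]
        linarith
      have : c i = max a (P i) := by simp only [hc]; rw [min_eq_right (le_of_lt h2)]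
      rw [this]; exact le_max_right _ _
    · have h1 : a < c (i+1) := lt_of_le_of_lt (hca i) hlt
      have h2 : a < max a (P (i+1)) := lt_of_lt_of_le h1 (min_le_right _ _)
      have h3 : a < P (i+1) := by
        rcases max_cases a (P (i+1)) with ⟨he, _⟩ | ⟨he, hle⟩
        · rw [he] at h2; linarith
        · linarith
      have : max a (P (i+1)) = P (i+1) := max_eq_right (le_of_lt h3)
      calc c (i+1) ≤ max a (P (i+1)) := min_le_right _ _
        _ = P (i+1) := this
  set S' : ℕ → Set ℝ := fun i => Set.Ioc (c i) (c i + lam * (c (i+1) - c i)) with hS'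
  have hLnn : ∀ i, (0:ℝ) ≤ c (i+1) - c i := fun i => by
    have := hcmono (by omega : i ≤ i + 1); linarith
  have hsub1 : ∀ i, S' i ⊆ Set.Ioc (c i) (c (i+1)) := by
    intro i
    apply Set.Ioc_subset_Ioc le_rfl
    have : lam * (c (i+1) - c i) ≤ 1 * (c (i+1) - c i) :=
      mul_le_mul_of_nonneg_right hlam1 (hLnn i)
    linarith
  have hIocab : ∀ i, Set.Ioc (c i) (c (i+1)) ⊆ Set.Ioc 0 1 := by
    intro i x hx
    exact ⟨lt_of_le_of_lt (by linarith [hca i] : (0:ℝ) ≤ c i) hx.1,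
      le_trans hx.2 (le_trans (hcb _) hb1)⟩
  -- integral over a clipped piece
  have hfull : ∀ i < k, ∫ x in Set.Ioc (c i) (c (i+1)), g x
      = (c (i+1) - c i) * g (P (i+1)) := by
    intro i hi
    rcases eq_or_lt_of_le (hcmono (by omega : i ≤ i + 1)) with he | hlt
    · rw [← he, Set.Ioc_self, setIntegral_empty, sub_self, zero_mul]
    · obtain ⟨hp1, hp2⟩ := hpl i hlt
      exact SD_integral_subpiece h hi hp1 (le_of_lt hlt) hp2
  have hSint : ∀ i < k, ∫ x in S' i, g x = lam * (c (i+1) - c i) * g (P (i+1)) := by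
    intro i hi
    have hLl : 0 ≤ lam * (c (i+1) - c i) := mul_nonneg hlam0 (hLnn i)
    rcases eq_or_lt_of_le hLl with he | hlt
    · have hempty : S' i = ∅ := by
        simp only [hS']
        rw [← he, add_zero, Set.Ioc_self]
      rw [hempty, setIntegral_empty, ← he, zero_mul]
    · have hclt : c i < c (i+1) := by
        rcases eq_or_lt_of_le (hcmono (by omega : i ≤ i + 1)) with he2 | h2
        · exfalso; rw [← he2] at hlt; simp at hlt
        · exact h2
      obtain ⟨hp1, hp2⟩ := hpl i hclt
      have hub : c i + lam * (c (i+1) - c i) ≤ P (i+1) := by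
        have h9 : lam * (c (i+1) - c i) ≤ 1 * (c (i+1) - c i) :=
          mul_le_mul_of_nonneg_right hlam1 (hLnn i)
        linarith
      have hlb : 0 ≤ lam * (c (i+1) - c i) := hLl
      rw [SD_integral_subpiece h hi hp1 (by linarith) hub]
      ring
  -- S' pieces are measurable and pairwise disjoint
  have hS'meas : ∀ i, MeasurableSet (S' i) := fun i => measurableSet_Ioc
  have hpd : Pairwise (Function.onFun Disjoint fun i => Set.Ioc (c i) (c (i+1))) := by
    have := hcmono.pairwise_disjoint_on_Ioc_succ
    simpa [Order.succ_eq_add_one] using this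
  have hS'pd : Pairwise (Function.onFun Disjoint S') := fun i j hij =>
    Set.disjoint_of_subset (hsub1 i) (hsub1 j) (hpd hij)
  -- the union covering (a, b]
  have hcover : Set.Ioc a b = ⋃ i ∈ Finset.range k, Set.Ioc (c i) (c (i+1)) := by
    have := hcmono.biUnion_Ico_Ioc_map_succ 0 k
    simp only [Order.succ_eq_add_one] at this
    rw [← hc0, ← hck, ← this]
    ext x
    simp
  have hint_ab : IntegrableOn g (Set.Ioc a b) :=
    SD_integrableOn' h (by
      intro x hx
      exact ⟨lt_of_le_of_lt h0a hx.1, le_trans hx.2 hb1⟩)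
  have hS'int : ∀ i, IntegrableOn g (S' i) :=
    fun i => SD_integrableOn' h (fun x hx => hIocab i (hsub1 i hx))
  have h0a_int : IntegrableOn g (Set.Ioc 0 a) :=
    SD_integrableOn' h (Set.Ioc_subset_Ioc le_rfl (by linarith))
  have hdisj : Disjoint (Set.Ioc (0:ℝ) a) (⋃ i ∈ Finset.range k, S' i) := by
    rw [Set.disjoint_left]
    intro x hx hx2
    simp only [Set.mem_iUnion] at hx2
    obtain ⟨i, _, hxi⟩ := hx2
    have h5 := (hsub1 i hxi).1
    have h6 := hca i
    linarith [hx.2]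
  have hmeasU : MeasurableSet (⋃ i ∈ Finset.range k, S' i) :=
    Finset.measurableSet_biUnion _ (fun i _ => hS'meas i)
  have hab_int' : ∫ x in Set.Ioc a b, g x
      = ∑ i ∈ Finset.range k, (c (i+1) - c i) * g (P (i+1)) := by
    rw [hcover, integral_biUnion_finset _ (fun i _ => measurableSet_Ioc)
      (hpd.set_pairwise _) (fun i _ => SD_integrableOn' h (hIocab i))]
    exact Finset.sum_congr rfl (fun i hi => hfull i (Finset.mem_range.1 hi))
  have hFb : (∫ x in Set.Ioc (0:ℝ) b, g x)
      = (∫ x in Set.Ioc (0:ℝ) a, g x) + ∫ x in Set.Ioc a b, g x :=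
    integral_Ioc_split (SD_integrableOn h) le_rfl h0a (by linarith) hb1
  refine ⟨Set.Ioc 0 a ∪ ⋃ i ∈ Finset.range k, S' i, ?_, ?_, ?_, ?_⟩
  · intro x hx
    rcases hx with hx | hx
    · exact ⟨hx.1, le_trans hx.2 (by linarith)⟩
    · simp only [Set.mem_iUnion] at hx
      obtain ⟨i, _, hxi⟩ := hx
      exact hIocab i (hsub1 i hxi)
  · exact measurableSet_Ioc.union hmeasU
  · rw [measure_union hdisj hmeasU]
    rw [measure_biUnion_finset (hS'pd.set_pairwise _) (fun i _ => hS'meas i)]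
    have hv : ∀ i ∈ Finset.range k,
        volume (S' i) = ENNReal.ofReal (lam * (c (i+1) - c i)) := by
      intro i _
      simp only [hS', Real.volume_Ioc]
      congr 1; ring
    rw [Finset.sum_congr rfl hv,
      ← ENNReal.ofReal_sum_of_nonneg (fun i _ => mul_nonneg hlam0 (hLnn i)),
      ← Finset.mul_sum, Finset.sum_range_sub c, hc0, hck, Real.volume_Ioc, sub_zero,
      ← ENNReal.ofReal_add h0a (mul_nonneg hlam0 (le_of_lt hba))]
    congr 1
    rw [hlam]
    field_simp
    ring
  · rw [setIntegral_union hdisj hmeasU h0a_int (integrableOn_finset_iUnion.2 (fun i _ => hS'int i))]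
    rw [integral_biUnion_finset _ (fun i _ => hS'meas i) (hS'pd.set_pairwise _)
      (fun i _ => hS'int i)]
    have hv : ∀ i ∈ Finset.range k,
        (∫ x in S' i, g x) = lam * ((c (i+1) - c i) * g (P (i+1))) := by
      intro i hi
      rw [hSint i (Finset.mem_range.1 hi)]; ring
    rw [Finset.sum_congr rfl hv, ← Finset.mul_sum, ← hab_int']
    rw [hFb]
    ring

lemma exists_flat (t : ℝ → ℝ) {K : ℕ} {P : ℕ → ℝ} (h : StepData t K P)
    {m : ℝ} (hm : m ∈ Set.Ioc (0:ℝ) 1) :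
    ∃ a b v, 0 ≤ a ∧ a < m ∧ m ≤ b ∧ b ≤ 1 ∧
      (a = 0 ∨ (a ∈ Set.Ioo (0:ℝ) 1 ∧ ¬ ContinuousAt t a)) ∧
      (b = 1 ∨ (b ∈ Set.Ioo (0:ℝ) 1 ∧ ¬ ContinuousAt t b)) ∧
      (∀ x ∈ Set.Ioc a b, t x = v) := by
  classical
  -- find the piece containing m
  have hm' : m ∈ ⋃ i ∈ Finset.range K, Set.Ioc (P i) (P (i+1)) := by
    rw [← SD_cover h]; exact hm
  simp only [Set.mem_iUnion, Finset.mem_range] at hm'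
  obtain ⟨i₀, hi₀K, hmi₀⟩ := hm'
  set Lgood : ℕ → Prop := fun j => P j = 0 ∨ (P j ∈ Set.Ioo (0:ℝ) 1 ∧ ¬ ContinuousAt t (P j))
    with hLgood
  set Rgood : ℕ → Prop := fun j => P j = 1 ∨ (P j ∈ Set.Ioo (0:ℝ) 1 ∧ ¬ ContinuousAt t (P j))
    with hRgood
  set j₁ := Nat.findGreatest Lgood i₀ with hj₁
  have hL0 : Lgood 0 := Or.inl h.zero
  have hLj₁ : Lgood j₁ := Nat.findGreatest_spec (Nat.zero_le i₀) hL0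
  have hj₁le : j₁ ≤ i₀ := Nat.findGreatest_le i₀
  have hj₁max : ∀ j, j₁ < j → j ≤ i₀ → ¬ Lgood j := fun j hj hji =>
    Nat.findGreatest_is_greatest hj hji
  have hex : ∃ j, i₀ + 1 ≤ j ∧ j ≤ K ∧ Rgood j :=
    ⟨K, by omega, le_rfl, Or.inl h.one⟩
  set j₂ := Nat.find hex with hj₂
  obtain ⟨hj₂ge, hj₂le, hRj₂⟩ := Nat.find_spec hex
  have hj₂min : ∀ j, j < j₂ → ¬ (i₀ + 1 ≤ j ∧ j ≤ K ∧ Rgood j) := fun j hj =>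
    Nat.find_min hex hj
  have hj₁₂ : j₁ < j₂ := by omega
  -- continuity at interior partition points
  have hcont : ∀ j, j₁ < j → j < j₂ → ContinuousAt t (P j) := by
    intro j hj1 hj2
    have hjK : j < K := by omega
    have hj0 : 0 < j := by omega
    have hP0 : 0 < P j := by rw [← h.zero]; exact SD_strict' h hj0 (by omega)
    have hP1 : P j < 1 := by rw [← h.one]; exact SD_strict' h hjK le_rfl
    by_contra hnc
    rcases le_or_gt j i₀ with hji | hji
    · exact hj₁max j hj1 hji (Or.inr ⟨⟨hP0, hP1⟩, hnc⟩)
    · exact hj₂min j hj2 ⟨by omega, by omega, Or.inr ⟨⟨hP0, hP1⟩, hnc⟩⟩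
  -- adjacent pieces have equal values between j₁ and j₂
  have hkey : ∀ j, j₁ ≤ j → j + 1 < j₂ → t (P (j+1)) = t (P (j+2)) := by
    intro j hj1 hj2
    have hjK : j + 1 < K := by omega
    have hstrict : P (j+1) < P (j+2) := h.strict (j+1) hjK
    have hc := hcont (j+1) (by omega) (by omega)
    have hT : Filter.Tendsto t (nhdsWithin (P (j+1)) (Set.Ioi (P (j+1)))) (nhds (t (P (j+1)))) :=
      hc.continuousWithinAt
    have hEv : t =ᶠ[nhdsWithin (P (j+1)) (Set.Ioi (P (j+1)))] fun _ => t (P (j+2)) := by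
      apply Filter.eventuallyEq_of_mem (Ioo_mem_nhdsGT_of_mem ⟨le_rfl, hstrict⟩)
      intro x hx
      exact h.const (j+1) hjK x ⟨hx.1, le_of_lt hx.2⟩
    have hT2 : Filter.Tendsto (fun _ : ℝ => t (P (j+2)))
        (nhdsWithin (P (j+1)) (Set.Ioi (P (j+1)))) (nhds (t (P (j+1)))) :=
      hT.congr' hEv
    exact (tendsto_const_nhds_iff.1 hT2).symm
  have hconst : ∀ j, j₁ ≤ j → j < j₂ → t (P (j+1)) = t (P (j₁+1)) := by
    intro j hj
    induction j, hj using Nat.le_induction with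
    | base => intro _; rfl
    | succ n hn ih =>
      intro h2
      rw [← hkey n hn (by omega)]
      exact ih (by omega)
  refine ⟨P j₁, P j₂, t (P (j₁+1)), ?_, ?_, ?_, ?_, hLj₁, hRj₂, ?_⟩
  · rw [← h.zero]; exact h.mono (Nat.zero_le _)
  · exact lt_of_le_of_lt (h.mono hj₁le) hmi₀.1
  · exact le_trans hmi₀.2 (h.mono hj₂ge)
  · rw [← h.one]; exact h.mono hj₂le
  · intro x hx
    have hcov := h.mono.biUnion_Ico_Ioc_map_succ j₁ j₂
    simp only [Order.succ_eq_add_one] at hcov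
    rw [← hcov] at hx
    simp only [Set.mem_iUnion, Set.mem_Ico] at hx
    obtain ⟨j, ⟨hja, hjb⟩, hxj⟩ := hx
    rw [h.const j (by omega) x hxj]
    exact hconst j hja hjb

theorem stmt14 (s u t : ℝ → ℝ)
    (hs : IsStepFun s) (hu : IsStepFun u) (ht : IsStepFun t)
    (hs0 : ∀ x ∈ Set.Ioc (0 : ℝ) 1, 0 ≤ s x)
    (hu0 : ∀ x ∈ Set.Ioc (0 : ℝ) 1, 0 ≤ u x)
    (ht0 : ∀ x ∈ Set.Ioc (0 : ℝ) 1, 0 ≤ t x)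
    (hmono : MonotoneOn t (Set.Ioc (0 : ℝ) 1))
    (hpres : ∀ m₀ : ℝ, (m₀ = 1 ∨ (m₀ ∈ Set.Ioo (0 : ℝ) 1 ∧ ¬ ContinuousAt t m₀)) →
      (∫ x in Set.Ioc (0 : ℝ) m₀, t x) = ∫ x in Set.Ioc (0 : ℝ) m₀, s x)
    (h4 : ∀ m ∈ Set.Ioc (0 : ℝ) 1,
      (∫ x in Set.Ioc (0 : ℝ) m, u x) ≤ 4 * ∫ x in Set.Ioc (0 : ℝ) m, s x) :
    ∀ m ∈ Set.Ioc (0 : ℝ) 1, PF u m ≤ 4 * PF t m := by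
  intro m hm
  obtain ⟨ku, Pu, hU⟩ := isStepFun_nat hu
  obtain ⟨kt, Pt, hT⟩ := isStepFun_nat ht
  obtain ⟨a, b, v, h0a, ham, hmb, hb1, hagood, hbgood, hflat⟩ := exists_flat t hT hm
  have hab : a < b := lt_of_lt_of_le ham hmb
  set lam : ℝ := (m - a)/(b - a) with hlamdef
  have hba : (0:ℝ) < b - a := by linarith
  have hlam0 : 0 ≤ lam := div_nonneg (by linarith) (le_of_lt hba)
  have hlam1 : lam ≤ 1 := by rw [hlamdef, div_le_one hba]; linarith
  have hlm : lam * (b - a) = m - a := div_mul_cancel₀ _ (ne_of_gt hba)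
  set Fta := ∫ x in Set.Ioc (0:ℝ) a, t x with hFta_def
  set Ftb := ∫ x in Set.Ioc (0:ℝ) b, t x with hFtb_def
  set Fsa := ∫ x in Set.Ioc (0:ℝ) a, s x with hFsa_def
  set Fsb := ∫ x in Set.Ioc (0:ℝ) b, s x with hFsb_def
  set Fua := ∫ x in Set.Ioc (0:ℝ) a, u x with hFua_def
  set Fub := ∫ x in Set.Ioc (0:ℝ) b, u x with hFub_def
  have hFta : Fta = Fsa := by
    rcases hagood with rfl | ⟨hIoo, hnc⟩
    · simp only [hFta_def, hFsa_def, Set.Ioc_self, Measure.restrict_empty,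
        integral_zero_measure]
    · exact hpres a (Or.inr ⟨hIoo, hnc⟩)
  have hFtb : Ftb = Fsb := by
    rcases hbgood with rfl | ⟨hIoo, hnc⟩
    · exact hpres 1 (Or.inl rfl)
    · exact hpres b (Or.inr ⟨hIoo, hnc⟩)
  have hUa : Fua ≤ 4 * Fsa := by
    rcases eq_or_lt_of_le h0a with rfl | hpos
    · simp only [hFua_def, hFsa_def, Set.Ioc_self, Measure.restrict_empty,
        integral_zero_measure]
      norm_num
    · exact h4 a ⟨hpos, by linarith [hm.2]⟩
  have hUb : Fub ≤ 4 * Fsb := h4 b ⟨lt_of_lt_of_le hm.1 hmb, hb1⟩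
  have hflat_int : ∀ r, a ≤ r → r ≤ b →
      (∫ x in Set.Ioc a r, t x) = (r - a) * v := by
    intro r har hrb
    rw [setIntegral_congr_fun measurableSet_Ioc
      (fun x hx => hflat x ⟨hx.1, le_trans hx.2 hrb⟩)]
    rw [setIntegral_const, Real.volume_real_Ioc_of_le har, smul_eq_mul]
  have htm : (∫ x in Set.Ioc (0:ℝ) m, t x) = Fta + (m - a) * v := by
    rw [integral_Ioc_split (SD_integrableOn hT) le_rfl h0a (le_of_lt ham) hm.2,
      hflat_int m (le_of_lt ham) hmb]
  have htb : Ftb = Fta + (b - a) * v := by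
    rw [hFtb_def, integral_Ioc_split (SD_integrableOn hT) le_rfl h0a (le_of_lt hab) hb1,
      hflat_int b (le_of_lt hab) le_rfl]
  have hPFt : PF t m = ∫ x in Set.Ioc (0:ℝ) m, t x := PF_eq_of_monotone hT ht0 hmono hm
  obtain ⟨S, hS1, hS2, hS3, hS4⟩ := chord hU h0a (le_of_lt ham) hmb hb1 hab
  have h1 : PF u m ≤ ∫ x in S, u x := PF_le hu0 hS1 hS2 hS3
  rw [hS4] at h1
  rw [hPFt, htm]
  calc PF u m ≤ Fua + lam * (Fub - Fua) := h1
    _ = (1 - lam) * Fua + lam * Fub := by ring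
    _ ≤ (1 - lam) * (4 * Fsa) + lam * (4 * Fsb) :=
        add_le_add (mul_le_mul_of_nonneg_left hUa (by linarith))
          (mul_le_mul_of_nonneg_left hUb hlam0)
    _ = (1 - lam) * (4 * Fta) + lam * (4 * Ftb) := by rw [hFta, hFtb]
    _ = 4 * (Fta + lam * (Ftb - Fta)) := by ring
    _ = 4 * (Fta + lam * ((b - a) * v)) := by rw [htb]; ring_nf
    _ = 4 * (Fta + (m - a) * v) := by rw [← hlm]; ring


end PD
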